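/- arXiv:2210.02331 — 2 statements merged into one kernel-verified Lean document; each statement's English description precedes it below -/
import Mathlib

section
/- Assume H satisfies (H0), (H1), (H2) and (H7). Then for every q>2, every ε>0 and every γ>γ₀ there exists a constant κ_ε>0 such that for all w∈ℝ²: |H_u(w)|+|H_v(w)|≤ε|w|^τ+κ_ε|w|^{q−1}(e^{γ|w|²}−1), and consequently |H(w)|≤ε|w|^{τ+1}+κ_ε|w|^{q}(e^{γ|w|²}−1). -/
open MeasureTheory Filter Topology Asymptotics Real Set Bornology

noncomputable section

/-- The plane `ℝ²`, domain of the functions. -/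
abbrev Plane := EuclideanSpace ℝ (Fin 2)

/-- For `w = (u,v) ∈ ℝ²`, the quantity `|w|² = u² + v²`. -/
def nsq (w : ℝ × ℝ) : ℝ := w.1 ^ 2 + w.2 ^ 2

/-- For `w = (u,v) ∈ ℝ²`, the euclidean norm `|w| = √(u² + v²)`. -/
def normR2 (w : ℝ × ℝ) : ℝ := Real.sqrt (nsq w)

/-- `H_u`, the first partial derivative of `H`. -/
def Hu (H : ℝ × ℝ → ℝ) (w : ℝ × ℝ) : ℝ := fderiv ℝ H w (1, 0)

/-- `H_v`, the second partial derivative of `H`. -/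
def Hv (H : ℝ × ℝ → ℝ) (w : ℝ × ℝ) : ℝ := fderiv ℝ H w (0, 1)

/-- `H̃(w) = ∇H(w)·w - 2 H(w)`. -/
def Htil (H : ℝ × ℝ → ℝ) (w : ℝ × ℝ) : ℝ := Hu H w * w.1 + Hv H w * w.2 - 2 * H w

/-- Membership in `H¹(ℝ²)`: `u ∈ L²`, differentiable with gradient in `L²`. -/
def InH1 (u : Plane → ℝ) : Prop :=
  MemLp u 2 volume ∧ Differentiable ℝ u ∧ MemLp (fun x => ‖gradient u x‖) 2 volume

/-- A radial function on the plane. -/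
def Radial (u : Plane → ℝ) : Prop := ∀ x y : Plane, ‖x‖ = ‖y‖ → u x = u y

/-- `‖∇u‖_{L²}²`. -/
def grad2 (u : Plane → ℝ) : ℝ := ∫ x, ‖gradient u x‖ ^ 2

/-- `‖u‖_{L²}²`. -/
def mass (u : Plane → ℝ) : ℝ := ∫ x, (u x) ^ 2

/-- The torus `𝒯(a,b)`. -/
def InT (a b : ℝ) (w : (Plane → ℝ) × (Plane → ℝ)) : Prop :=
  InH1 w.1 ∧ InH1 w.2 ∧ mass w.1 = a ^ 2 ∧ mass w.2 = b ^ 2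

/-- The radial torus `𝒯_r(a,b)`. -/
def InTr (a b : ℝ) (w : (Plane → ℝ) × (Plane → ℝ)) : Prop :=
  InT a b w ∧ Radial w.1 ∧ Radial w.2

/-- `|∇w|₂² = ‖∇u‖_{L²}² + ‖∇v‖_{L²}²`. -/
def gradD2 (w : (Plane → ℝ) × (Plane → ℝ)) : ℝ := grad2 w.1 + grad2 w.2

/-- The energy functional `J`. -/
def Jfun (H : ℝ × ℝ → ℝ) (w : (Plane → ℝ) × (Plane → ℝ)) : ℝ :=
  (1 / 2) * gradD2 w - ∫ x, H (w.1 x, w.2 x)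

/-- The Pohozaev functional `P`. -/
def Pfun (H : ℝ × ℝ → ℝ) (w : (Plane → ℝ) × (Plane → ℝ)) : ℝ :=
  gradD2 w - ∫ x, Htil H (w.1 x, w.2 x)

/-- The `L²`-invariant scaling `F(w,s)(x) = (eˢ u(eˢ x), eˢ v(eˢ x))`. -/
def scaleF (w : (Plane → ℝ) × (Plane → ℝ)) (s : ℝ) : (Plane → ℝ) × (Plane → ℝ) :=
  (fun x => Real.exp s * w.1 (Real.exp s • x), fun x => Real.exp s * w.2 (Real.exp s • x))

/-- Hypothesis (H1): `H_u(w) = o(|w|^τ)` and `H_v(w) = o(|w|^τ)` as `|w| → 0`. -/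
def cond1 (H : ℝ × ℝ → ℝ) (τ : ℝ) : Prop :=
  (Hu H) =o[𝓝 0] (fun w : ℝ × ℝ => normR2 w ^ τ) ∧
  (Hv H) =o[𝓝 0] (fun w : ℝ × ℝ => normR2 w ^ τ)

/-- Hypothesis (H2): `0 < θ H(w) ≤ ∇H(w)·w` for all `w ≠ 0`. -/
def cond2 (H : ℝ × ℝ → ℝ) (θ : ℝ) : Prop :=
  ∀ w : ℝ × ℝ, w ≠ 0 → 0 < θ * H w ∧ θ * H w ≤ Hu H w * w.1 + Hv H w * w.2

/-- Hypothesis (H3). -/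
def cond3 (H : ℝ × ℝ → ℝ) : Prop :=
  (∀ u : ℝ, Hu H (u, 0) = 0) ∧ (∀ v : ℝ, Hv H (0, v) = 0)

/-- Hypothesis (H4): `H_u(w) u > 0` and `H_v(w) v > 0` for `u, v ≠ 0`. -/
def cond4 (H : ℝ × ℝ → ℝ) : Prop :=
  ∀ u v : ℝ, u ≠ 0 → v ≠ 0 → 0 < Hu H (u, v) * u ∧ 0 < Hv H (u, v) * v

/-- Hypothesis (H5): `∇H̃` exists and `∇H̃(w)·w ≥ 4 H̃(w)`. -/
def cond5 (H : ℝ × ℝ → ℝ) : Prop :=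
  Differentiable ℝ (Htil H) ∧ ∀ w : ℝ × ℝ, 4 * Htil H w ≤ fderiv ℝ (Htil H) w w

/-- Hypothesis (H6): `H(w) ≥ μ |w|^σ`. -/
def cond6 (H : ℝ × ℝ → ℝ) (σ μ : ℝ) : Prop := ∀ w : ℝ × ℝ, μ * normR2 w ^ σ ≤ H w

/-- Hypothesis (H7): `γ₀`-exponential critical growth of `H_u` and `H_v`. -/
def cond7 (H : ℝ × ℝ → ℝ) (γ₀ : ℝ) : Prop :=
  (∀ γ > γ₀,
    Tendsto (fun w : ℝ × ℝ => |Hu H w| * Real.exp (-γ * nsq w)) (cobounded (ℝ × ℝ)) (𝓝 0) ∧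
    Tendsto (fun w : ℝ × ℝ => |Hv H w| * Real.exp (-γ * nsq w)) (cobounded (ℝ × ℝ)) (𝓝 0)) ∧
  (∀ γ, 0 < γ → γ < γ₀ →
    Tendsto (fun w : ℝ × ℝ => |Hu H w| * Real.exp (-γ * nsq w)) (cobounded (ℝ × ℝ)) atTop ∧
    Tendsto (fun w : ℝ × ℝ => |Hv H w| * Real.exp (-γ * nsq w)) (cobounded (ℝ × ℝ)) atTop)

/-- The squared norm of the space `E = H¹ × H¹`. -/
def ENormSq (w : (Plane → ℝ) × (Plane → ℝ)) : ℝ := mass w.1 + mass w.2 + gradD2 w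

/-- Continuity of a path `[0,1] → E` with respect to the `E`-norm. -/
def PathCont (h : ℝ → (Plane → ℝ) × (Plane → ℝ)) : Prop :=
  ∀ t ∈ Icc (0 : ℝ) 1, ∀ ε > 0, ∃ δ > 0, ∀ s ∈ Icc (0 : ℝ) 1,
    |s - t| < δ → ENormSq (h s - h t) < ε

/-- Admissible paths in `Γ`: continuous paths in `𝒯_r(a,b)` joining `w₁` to `w₂`. -/
def AdmPath (a b : ℝ) (w₁ w₂ : (Plane → ℝ) × (Plane → ℝ))
    (h : ℝ → (Plane → ℝ) × (Plane → ℝ)) : Prop :=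
  PathCont h ∧ (∀ t ∈ Icc (0 : ℝ) 1, InTr a b (h t)) ∧ h 0 = w₁ ∧ h 1 = w₂

/-- `max_{t ∈ [0,1]} J(h(t))` (as a supremum). -/
def JmaxOn (H : ℝ × ℝ → ℝ) (h : ℝ → (Plane → ℝ) × (Plane → ℝ)) : ℝ :=
  sSup ((fun t => Jfun H (h t)) '' Icc (0 : ℝ) 1)

/-- The set of values `max_{t} J(h(t))` over admissible paths `h ∈ Γ`;
its infimum is the mountain-pass level `m_μ(a,b)`. -/
def MPLevels (H : ℝ × ℝ → ℝ) (a b : ℝ) (w₁ w₂ : (Plane → ℝ) × (Plane → ℝ)) : Set ℝ :=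
  {c | ∃ h, AdmPath a b w₁ w₂ h ∧ c = JmaxOn H h}

/-- The mountain-pass geometry for the endpoints `w₁, w₂`. -/
def MPGeom (H : ℝ × ℝ → ℝ) (a b K : ℝ) (w₁ w₂ : (Plane → ℝ) × (Plane → ℝ)) : Prop :=
  0 < K ∧ InTr a b w₁ ∧ InTr a b w₂ ∧ gradD2 w₁ < K / 2 ∧ 2 * K < gradD2 w₂ ∧
    0 < Jfun H w₁ ∧ Jfun H w₂ < 0

/-- The pairing `∫ (∇u·∇φ + λ u φ - g φ)` appearing in the weak form of the equations. -/
def testPair (u φ : Plane → ℝ) (lam : ℝ) (g : Plane → ℝ) : ℝ :=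
  (∫ x, (inner ℝ (gradient u x) (gradient φ x) : ℝ)) + lam * (∫ x, u x * φ x) - ∫ x, g x * φ x

/-- The squared `H¹`-norm. -/
def H1normSq (φ : Plane → ℝ) : ℝ := mass φ + grad2 φ

/-- A Palais–Smale sequence for `J` at level `c`, with Lagrange multipliers
`λ_{1,n}, λ_{2,n}`:  `J(w_n) → c`, `P(w_n) → 0` and
`-Δu_n + λ_{1,n}u_n - H_u(w_n) → 0`, `-Δv_n + λ_{2,n}v_n - H_v(w_n) → 0` in `(H¹)'`. -/
def IsPSSeq (H : ℝ × ℝ → ℝ) (a b c : ℝ) (W : ℕ → (Plane → ℝ) × (Plane → ℝ))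
    (lam1 lam2 : ℕ → ℝ) : Prop :=
  (∀ n, InTr a b (W n)) ∧
  Tendsto (fun n => Jfun H (W n)) atTop (𝓝 c) ∧
  Tendsto (fun n => Pfun H (W n)) atTop (𝓝 0) ∧
  ∃ eps : ℕ → ℝ, Tendsto eps atTop (𝓝 0) ∧
    ∀ n, ∀ φ : Plane → ℝ, InH1 φ → H1normSq φ ≤ 1 →
      |testPair (W n).1 φ (lam1 n) (fun x => Hu H ((W n).1 x, (W n).2 x))| ≤ eps n ∧
      |testPair (W n).2 φ (lam2 n) (fun x => Hv H ((W n).1 x, (W n).2 x))| ≤ eps n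

/-- Weak convergence in `H¹`: convergence of the `H¹` inner products against
every `H¹` test function. -/
def WeakH1 (u : ℕ → Plane → ℝ) (ul : Plane → ℝ) : Prop :=
  ∀ φ : Plane → ℝ, InH1 φ →
    Tendsto (fun n => (∫ x, u n x * φ x) +
        ∫ x, (inner ℝ (gradient (u n) x) (gradient φ x) : ℝ)) atTop
      (𝓝 ((∫ x, ul x * φ x) + ∫ x, (inner ℝ (gradient ul x) (gradient φ x) : ℝ)))

/-- Convergence in `L¹(ℝ²)`. -/
def TendsL1 (f : ℕ → Plane → ℝ) (g : Plane → ℝ) : Prop :=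
  Tendsto (fun n => ∫ x, |f n x - g x|) atTop (𝓝 0)

/-- `u` is a weak solution of `-Δu + λ u = g` in `ℝ²`. -/
def WeakSolEq (lam : ℝ) (u : Plane → ℝ) (g : Plane → ℝ) : Prop :=
  ∀ φ : Plane → ℝ, InH1 φ →
    (∫ x, (inner ℝ (gradient u x) (gradient φ x) : ℝ)) + lam * (∫ x, u x * φ x)
      = ∫ x, g x * φ x

/-- The values of `J` on the Pohozaev manifold `𝒫(a,b)`;
its infimum is the ground-state level `c(a,b)`. -/
def PoSet (H : ℝ × ℝ → ℝ) (a b : ℝ) : Set ℝ :=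
  {c | ∃ w, InTr a b w ∧ Pfun H w = 0 ∧ c = Jfun H w}


lemma nsq_nonneg' (w : ℝ × ℝ) : 0 ≤ nsq w := by unfold nsq; positivity
lemma normR2_nonneg' (w : ℝ × ℝ) : 0 ≤ normR2 w := Real.sqrt_nonneg _
lemma sq_normR2' (w : ℝ × ℝ) : normR2 w ^ (2:ℕ) = nsq w := Real.sq_sqrt (nsq_nonneg' w)
lemma abs_fst_le' (w : ℝ × ℝ) : |w.1| ≤ normR2 w := by
  rw [normR2, nsq, ← Real.sqrt_sq_eq_abs]
  exact Real.sqrt_le_sqrt (by nlinarith [sq_nonneg w.2, sq_abs w.1])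
lemma abs_snd_le' (w : ℝ × ℝ) : |w.2| ≤ normR2 w := by
  rw [normR2, nsq, ← Real.sqrt_sq_eq_abs]
  exact Real.sqrt_le_sqrt (by nlinarith [sq_nonneg w.1, sq_abs w.2])
lemma norm_le_normR2' (w : ℝ × ℝ) : ‖w‖ ≤ normR2 w := by
  rw [Prod.norm_def]
  exact max_le (abs_fst_le' w) (abs_snd_le' w)
lemma nsq_pos' {w : ℝ × ℝ} (hw : w ≠ 0) : 0 < nsq w := by
  rcases lt_or_eq_of_le (nsq_nonneg' w) with h | h
  · exact h
  exfalso
  apply hw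
  have h1 : w.1 = 0 := by unfold nsq at h; nlinarith [sq_nonneg w.1, sq_nonneg w.2]
  have h2 : w.2 = 0 := by unfold nsq at h; nlinarith [sq_nonneg w.1, sq_nonneg w.2]
  exact Prod.ext h1 h2
lemma normR2_pos' {w : ℝ × ℝ} (hw : w ≠ 0) : 0 < normR2 w := Real.sqrt_pos.2 (nsq_pos' hw)
lemma normR2_zero' : normR2 0 = 0 := by simp [normR2, nsq]
lemma nsq_zero' : nsq 0 = 0 := by simp [nsq]
lemma cont_Hu' (H : ℝ × ℝ → ℝ) (h0 : ContDiff ℝ 2 H) : Continuous (Hu H) :=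
  (h0.continuous_fderiv (by norm_num)).clm_apply continuous_const
lemma cont_Hv' (H : ℝ × ℝ → ℝ) (h0 : ContDiff ℝ 2 H) : Continuous (Hv H) :=
  (h0.continuous_fderiv (by norm_num)).clm_apply continuous_const

set_option maxHeartbeats 1600000 in
/-- The growth estimates (2.5) and (2.6) on the nonlinearities. -/
theorem growth_estimates (H : ℝ × ℝ → ℝ) (τ θ γ₀ : ℝ)
    (hτ : 3 < τ) (hθ : 4 < θ) (hγ₀ : 0 < γ₀)
    (h0 : ContDiff ℝ 2 H) (h1 : cond1 H τ) (h2 : cond2 H θ) (h7 : cond7 H γ₀) :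
    ∀ q > (2 : ℝ), ∀ ε > (0 : ℝ), ∀ γ > γ₀, ∃ κ > (0 : ℝ), ∀ w : ℝ × ℝ,
      |Hu H w| + |Hv H w| ≤
        ε * normR2 w ^ τ + κ * normR2 w ^ (q - 1) * (Real.exp (γ * nsq w) - 1) ∧
      |H w| ≤
        ε * normR2 w ^ (τ + 1) + κ * normR2 w ^ q * (Real.exp (γ * nsq w) - 1) := by
  obtain ⟨h1u, h1v⟩ := h1
  intro q hq ε hε γ hγ
  have hγpos : 0 < γ := hγ₀.trans hγ
  have hcontHu := cont_Hu' H h0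
  have hcontHv := cont_Hv' H h0
  -- H 0 = 0
  have hH0 : H 0 = 0 := by
    haveI := Module.punctured_nhds_neBot ℝ (ℝ × ℝ)
    have hcH : Tendsto (fun w : ℝ × ℝ => θ * H w) (𝓝[≠] (0:ℝ×ℝ)) (𝓝 (θ * H 0)) :=
      ((continuous_const.mul h0.continuous).tendsto 0).mono_left nhdsWithin_le_nhds
    have hcG : Tendsto (fun w : ℝ × ℝ => Hu H w * w.1 + Hv H w * w.2) (𝓝[≠] (0:ℝ×ℝ)) (𝓝 0) := by
      have hc : Continuous fun w : ℝ × ℝ => Hu H w * w.1 + Hv H w * w.2 :=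
        (hcontHu.mul continuous_fst).add (hcontHv.mul continuous_snd)
      have := (hc.tendsto 0).mono_left (nhdsWithin_le_nhds : 𝓝[≠] (0:ℝ×ℝ) ≤ 𝓝 0)
      simpa using this
    have hev : ∀ᶠ w in 𝓝[≠] (0:ℝ×ℝ), θ * H w ≤ Hu H w * w.1 + Hv H w * w.2 :=
      eventually_mem_nhdsWithin.mono fun w hw => (h2 w hw).2
    have hev' : ∀ᶠ w in 𝓝[≠] (0:ℝ×ℝ), (0:ℝ) ≤ θ * H w :=
      eventually_mem_nhdsWithin.mono fun w hw => (h2 w hw).1.le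
    have hub : θ * H 0 ≤ 0 := le_of_tendsto_of_tendsto hcH hcG hev
    have hlb : 0 ≤ θ * H 0 := le_of_tendsto_of_tendsto tendsto_const_nhds hcH hev'
    nlinarith
  -- small-ball bound from (H1)
  have hsmall : ∀ᶠ w : ℝ × ℝ in 𝓝 0, |Hu H w| + |Hv H w| ≤ ε * normR2 w ^ τ := by
    filter_upwards [isLittleO_iff.mp h1u (show (0:ℝ) < ε/2 by linarith),
      isLittleO_iff.mp h1v (show (0:ℝ) < ε/2 by linarith)] with w hu hv
    rw [Real.norm_eq_abs, Real.norm_eq_abs,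
      abs_of_nonneg (Real.rpow_nonneg (normR2_nonneg' w) τ)] at hu hv
    linarith
  rw [Metric.eventually_nhds_iff] at hsmall
  obtain ⟨δ, hδ, hsmall⟩ := hsmall
  -- bound at infinity from (H7)
  obtain ⟨hbu, hbv⟩ := h7.1 γ hγ
  have hbig : ∀ᶠ w : ℝ × ℝ in cobounded (ℝ × ℝ),
      |Hu H w| * Real.exp (-γ * nsq w) < 1 ∧ |Hv H w| * Real.exp (-γ * nsq w) < 1 :=
    (hbu.eventually_lt_const one_pos).and (hbv.eventually_lt_const one_pos)
  rw [(Metric.hasBasis_cobounded_compl_closedBall (0 : ℝ × ℝ)).eventually_iff] at hbig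
  obtain ⟨r, -, hbig⟩ := hbig
  set R : ℝ := max r 1 with hRdef
  have hR1 : (1:ℝ) ≤ R := le_max_right _ _
  -- compact bound on the middle annulus
  obtain ⟨M₀, hM₀⟩ := (isCompact_closedBall (0 : ℝ × ℝ) R).exists_bound_of_continuousOn
    ((hcontHu.abs.add hcontHv.abs).continuousOn)
  set M : ℝ := max M₀ 1 with hMdef
  have hM1 : (1:ℝ) ≤ M := le_max_right _ _
  have hDpos : 0 < δ ^ (q-1) * (γ * δ ^ 2) := by
    have := Real.rpow_pos_of_pos hδ (q-1)
    positivity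
  set κ₁ : ℝ := M / (δ ^ (q-1) * (γ * δ ^ 2)) with hκ₁def
  have hexpγ : Real.exp (-γ) < 1 := Real.exp_lt_one_iff.mpr (by linarith)
  have h1me : 0 < 1 - Real.exp (-γ) := by linarith
  set κ₂ : ℝ := 2 / (1 - Real.exp (-γ)) with hκ₂def
  have hκ₂ : 0 < κ₂ := by positivity
  have hκ₁ : 0 < κ₁ := by
    have : (0:ℝ) < M := by linarith
    positivity
  refine ⟨max κ₁ κ₂, lt_of_lt_of_le hκ₂ (le_max_right _ _), ?_⟩
  set κ : ℝ := max κ₁ κ₂ with hκdef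
  have hκpos : 0 < κ := lt_of_lt_of_le hκ₂ (le_max_right _ _)
  have hfirst : ∀ w : ℝ × ℝ, |Hu H w| + |Hv H w| ≤
      ε * normR2 w ^ τ + κ * normR2 w ^ (q-1) * (Real.exp (γ * nsq w) - 1) := by
    intro w
    have hN0 : 0 ≤ normR2 w := normR2_nonneg' w
    have hx0 : 0 ≤ γ * nsq w := mul_nonneg hγpos.le (nsq_nonneg' w)
    have hexp1 : 1 ≤ Real.exp (γ * nsq w) := Real.one_le_exp hx0
    have hterm2 : 0 ≤ κ * normR2 w ^ (q-1) * (Real.exp (γ * nsq w) - 1) :=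
      mul_nonneg (mul_nonneg hκpos.le (Real.rpow_nonneg hN0 _)) (by linarith)
    have hterm1 : 0 ≤ ε * normR2 w ^ τ := mul_nonneg hε.le (Real.rpow_nonneg hN0 _)
    rcases lt_or_ge ‖w‖ δ with hcase | hcase
    · have := hsmall (by simpa [dist_zero_right] using hcase)
      linarith
    · have hNδ : δ ≤ normR2 w := hcase.trans (norm_le_normR2' w)
      rcases le_or_gt ‖w‖ R with hcase2 | hcase2
      · -- middle region
        have hmem : w ∈ Metric.closedBall (0:ℝ×ℝ) R := by
          simpa [Metric.mem_closedBall, dist_zero_right] using hcase2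
        have hMb : |Hu H w| + |Hv H w| ≤ M := by
          have := hM₀ w hmem
          rw [Real.norm_eq_abs] at this
          calc |Hu H w| + |Hv H w| ≤ |(|Hu H w| + |Hv H w|)| := le_abs_self _
            _ ≤ M₀ := this
            _ ≤ M := le_max_left _ _
        have e1 : δ ^ (q-1) ≤ normR2 w ^ (q-1) :=
          Real.rpow_le_rpow hδ.le hNδ (by linarith)
        have e2 : γ * δ^2 ≤ Real.exp (γ * nsq w) - 1 := by
          have hδn : δ^2 ≤ nsq w := by nlinarith [sq_normR2' w]
          have h2' := Real.add_one_le_exp (γ * nsq w)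
          nlinarith
        have e3 : M = κ₁ * (δ ^ (q-1) * (γ * δ^2)) := by
          rw [hκ₁def, div_mul_cancel₀ _ hDpos.ne']
        have key : M ≤ κ * normR2 w ^ (q - 1) * (Real.exp (γ * nsq w) - 1) := by
          calc M = κ₁ * (δ ^ (q-1) * (γ * δ^2)) := e3
            _ ≤ κ * (normR2 w ^ (q-1) * (Real.exp (γ * nsq w) - 1)) := by
                apply mul_le_mul (le_max_left _ _)
                  (mul_le_mul e1 e2 (by positivity) (Real.rpow_nonneg hN0 _))
                  (by positivity) hκpos.le
            _ = κ * normR2 w ^ (q-1) * (Real.exp (γ * nsq w) - 1) := by ring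
        linarith
      · -- region at infinity
        have hmem : w ∈ (Metric.closedBall (0:ℝ×ℝ) r)ᶜ := by
          simp only [mem_compl_iff, Metric.mem_closedBall, dist_zero_right, not_le]
          exact lt_of_le_of_lt (le_max_left r 1) hcase2
        obtain ⟨hu1, hv1⟩ := hbig hmem
        have hprod : Real.exp (-γ * nsq w) * Real.exp (γ * nsq w) = 1 := by
          rw [← Real.exp_add, neg_mul, neg_add_cancel, Real.exp_zero]
        have hexppos := Real.exp_pos (γ * nsq w)
        have hexppos' := Real.exp_pos (-γ * nsq w)
        have hEu : |Hu H w| ≤ Real.exp (γ * nsq w) := by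
          calc |Hu H w| = |Hu H w| * Real.exp (-γ * nsq w) * Real.exp (γ * nsq w) := by
                rw [mul_assoc, hprod, mul_one]
            _ ≤ 1 * Real.exp (γ * nsq w) := mul_le_mul_of_nonneg_right hu1.le hexppos.le
            _ = Real.exp (γ * nsq w) := one_mul _
        have hEv : |Hv H w| ≤ Real.exp (γ * nsq w) := by
          calc |Hv H w| = |Hv H w| * Real.exp (-γ * nsq w) * Real.exp (γ * nsq w) := by
                rw [mul_assoc, hprod, mul_one]
            _ ≤ 1 * Real.exp (γ * nsq w) := mul_le_mul_of_nonneg_right hv1.le hexppos.le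
            _ = Real.exp (γ * nsq w) := one_mul _
        have hNR : R ≤ normR2 w := hcase2.le.trans (norm_le_normR2' w)
        have hnsq1 : 1 ≤ nsq w := by nlinarith [sq_normR2' w]
        have hxγ : γ ≤ γ * nsq w := by nlinarith
        have hNq1 : (1:ℝ) ≤ normR2 w ^ (q-1) :=
          Real.one_le_rpow (hR1.trans hNR) (by linarith)
        have hE1 : (1 - Real.exp (-γ)) * Real.exp (γ * nsq w) ≤ Real.exp (γ * nsq w) - 1 := by
          have ha : Real.exp (-(γ * nsq w)) ≤ Real.exp (-γ) := Real.exp_le_exp.2 (by linarith)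
          have hb : Real.exp (γ * nsq w) * Real.exp (-(γ * nsq w)) = 1 := by
            rw [← Real.exp_add, add_neg_cancel, Real.exp_zero]
          nlinarith
        have h2e : 2 * Real.exp (γ * nsq w) ≤ κ₂ * (Real.exp (γ * nsq w) - 1) := by
          have hc : κ₂ * ((1 - Real.exp (-γ)) * Real.exp (γ * nsq w))
              = 2 * Real.exp (γ * nsq w) := by
            rw [hκ₂def]; field_simp
          have := mul_le_mul_of_nonneg_left hE1 hκ₂.le
          linarith
        have hEnn : 0 ≤ Real.exp (γ * nsq w) - 1 := by linarith
        have hfin : κ₂ * (Real.exp (γ * nsq w) - 1)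
            ≤ κ * normR2 w ^ (q-1) * (Real.exp (γ * nsq w) - 1) := by
          have hκκ : κ₂ ≤ κ * normR2 w ^ (q-1) := by
            calc κ₂ ≤ κ := le_max_right _ _
              _ = κ * 1 := (mul_one κ).symm
              _ ≤ κ * normR2 w ^ (q-1) := by
                  exact mul_le_mul_of_nonneg_left hNq1 hκpos.le
          exact mul_le_mul_of_nonneg_right hκκ hEnn
        linarith
  intro w
  refine ⟨hfirst w, ?_⟩
  by_cases hw : w = 0
  · subst hw
    rw [hH0, normR2_zero', nsq_zero', abs_zero,
      Real.zero_rpow (by linarith : τ + 1 ≠ 0), Real.zero_rpow (by linarith : q ≠ 0)]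
    simp
  · have hN := normR2_pos' hw
    obtain ⟨hpos, hineq⟩ := h2 w hw
    have hHpos : 0 < H w := by nlinarith
    have hb1 : Hu H w * w.1 + Hv H w * w.2 ≤ (|Hu H w| + |Hv H w|) * normR2 w := by
      have e1 : Hu H w * w.1 ≤ |Hu H w| * normR2 w := by
        calc Hu H w * w.1 ≤ |Hu H w * w.1| := le_abs_self _
          _ = |Hu H w| * |w.1| := abs_mul _ _
          _ ≤ |Hu H w| * normR2 w := mul_le_mul_of_nonneg_left (abs_fst_le' w) (abs_nonneg _)
      have e2 : Hv H w * w.2 ≤ |Hv H w| * normR2 w := by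
        calc Hv H w * w.2 ≤ |Hv H w * w.2| := le_abs_self _
          _ = |Hv H w| * |w.2| := abs_mul _ _
          _ ≤ |Hv H w| * normR2 w := mul_le_mul_of_nonneg_left (abs_snd_le' w) (abs_nonneg _)
      nlinarith
    have hSNnn : 0 ≤ (|Hu H w| + |Hv H w|) * normR2 w :=
      mul_nonneg (add_nonneg (abs_nonneg _) (abs_nonneg _)) hN.le
    have hmain : H w ≤ (|Hu H w| + |Hv H w|) * normR2 w := by nlinarith
    have hSN := mul_le_mul_of_nonneg_right (hfirst w) hN.le
    have hr1 : normR2 w ^ (τ + 1) = normR2 w ^ τ * normR2 w := Real.rpow_add_one hN.ne' τ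
    have hr2 : normR2 w ^ q = normR2 w ^ (q-1) * normR2 w := by
      conv_lhs => rw [show q = q - 1 + 1 by ring]
      exact Real.rpow_add_one hN.ne' (q-1)
    have expand : (ε * normR2 w ^ τ + κ * normR2 w ^ (q-1) * (Real.exp (γ * nsq w) - 1))
          * normR2 w
        = ε * normR2 w ^ (τ+1) + κ * normR2 w ^ q * (Real.exp (γ * nsq w) - 1) := by
      rw [hr1, hr2]; ring
    rw [expand] at hSN
    rw [abs_of_pos hHpos]
    linarith

end
end

section
/- Assume H satisfies (H0)–(H2), (H6) and (H7), and let a,b>0 with a²+b²<2π/γ₀. Then for every w∈𝒯_r(a,b): ‖∇F(w,s)‖_{L²}→0 and J(F(w,s))→0 as s→−∞. -/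
open MeasureTheory Filter Topology Asymptotics Real Set Bornology

noncomputable section

lemma norm_gradient_eq (g : Plane → ℝ) (x : Plane) : ‖gradient g x‖ = ‖fderiv ℝ g x‖ := by
  rw [gradient]
  exact LinearIsometryEquiv.norm_map _ _

lemma int_comp (f : Plane → ℝ) (R : ℝ) (hR : 0 < R) :
    ∫ x, f (R • x) = (R ^ 2)⁻¹ * ∫ x, f x := by
  rw [MeasureTheory.Measure.integral_comp_smul volume f R, finrank_euclideanSpace_fin,
    abs_of_pos (by positivity), smul_eq_mul]

lemma hasDerivAt_ray (H : ℝ × ℝ → ℝ) (h0 : ContDiff ℝ 2 H) (z : ℝ × ℝ) (t : ℝ) :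
    HasDerivAt (fun t : ℝ => H (t • z)) (Hu H (t • z) * z.1 + Hv H (t • z) * z.2) t := by
  have hH : HasFDerivAt H (fderiv ℝ H (t • z)) (t • z) :=
    ((h0.differentiable (by norm_num)) (t • z)).hasFDerivAt
  have hz : HasDerivAt (fun t : ℝ => t • z) z t := by
    simpa using (hasDerivAt_id t).smul_const z
  have h : HasDerivAt (fun t : ℝ => H (t • z)) (fderiv ℝ H (t • z) z) t :=
    hH.comp_hasDerivAt t hz
  convert h using 1
  rw [Hu, Hv]
  set L := fderiv ℝ H (t • z) with hL
  calc L (1, 0) * z.1 + L (0, 1) * z.2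
      = L (z.1 • ((1 : ℝ), (0 : ℝ)) + z.2 • ((0 : ℝ), (1 : ℝ))) := by
        rw [L.map_add, L.map_smul, L.map_smul]; simp [smul_eq_mul]; ring
    _ = L z := by congr 1; simp [Prod.ext_iff]

lemma Hnonneg {H : ℝ × ℝ → ℝ} {σ μ : ℝ} (h6 : cond6 H σ μ) (hμ : 0 < μ) :
    ∀ z, 0 ≤ H z := fun z =>
  le_trans (mul_nonneg hμ.le (Real.rpow_nonneg (Real.sqrt_nonneg _) σ)) (h6 z)

lemma ray_bound {H : ℝ × ℝ → ℝ} {θ : ℝ} (h0 : ContDiff ℝ 2 H) (hθ : 3 ≤ θ)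
    (h2 : cond2 H θ) (z : ℝ × ℝ) (hz : z ≠ 0) {t : ℝ} (ht0 : 0 < t) (ht1 : t ≤ 1) :
    H (t • z) ≤ t ^ 3 * H z := by
  set φ : ℝ → ℝ := fun r => H (r • z) / r ^ 3 with hφ
  have key : ∀ r : ℝ, 0 < r → HasDerivAt φ
      (((Hu H (r • z) * z.1 + Hv H (r • z) * z.2) * r ^ 3
        - H (r • z) * ((3 : ℕ) * r ^ 2)) / (r ^ 3) ^ 2) r := by
    intro r hr
    have := (hasDerivAt_ray H h0 z r).div (hasDerivAt_pow 3 r) (by positivity)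
    exact this
  have hpos : ∀ r : ℝ, 0 < r → 0 < H (r • z) := by
    intro r hr
    have h := (h2 (r • z) (smul_ne_zero hr.ne' hz)).1
    nlinarith
  have hderiv_nonneg : ∀ r ∈ interior (Set.Ioi (0:ℝ)), 0 ≤ deriv φ r := by
    rw [interior_Ioi]
    intro r hr
    rw [(key r hr).deriv]
    have hzr : r • z ≠ 0 := smul_ne_zero hr.ne' hz
    have h2' := (h2 _ hzr).2
    have hfst : (r • z).1 = r * z.1 := rfl
    have hsnd : (r • z).2 = r * z.2 := rfl
    rw [hfst, hsnd] at h2'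
    have hH := hpos r hr
    have hnum : 0 ≤ (Hu H (r • z) * z.1 + Hv H (r • z) * z.2) * r ^ 3
        - H (r • z) * ((3 : ℕ) * r ^ 2) := by
      push_cast
      nlinarith [mul_le_mul_of_nonneg_left h2' (sq_nonneg r),
        mul_nonneg (mul_nonneg (sub_nonneg.2 hθ) hH.le) (sq_nonneg r)]
    exact div_nonneg hnum (by positivity)
  have mono : MonotoneOn φ (Set.Ioi (0:ℝ)) := by
    apply monotoneOn_of_deriv_nonneg (convex_Ioi 0)
    · intro r hr; exact ((key r hr).differentiableAt.continuousAt).continuousWithinAt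
    · rw [interior_Ioi]; intro r hr
      exact (key r hr).differentiableAt.differentiableWithinAt
    · exact hderiv_nonneg
  have hle := mono (Set.mem_Ioi.2 ht0) (Set.mem_Ioi.2 one_pos) ht1
  have hφ1 : φ 1 = H z := by simp [hφ]
  rw [hφ1] at hle
  have := (div_le_iff₀ (by positivity : (0:ℝ) < t ^ 3)).1 hle
  linarith [this]

lemma H_zero {H : ℝ × ℝ → ℝ} {θ σ μ : ℝ} (h0 : ContDiff ℝ 2 H) (hθ : 3 ≤ θ)
    (h2 : cond2 H θ) (h6 : cond6 H σ μ) (hμ : 0 < μ) : H 0 = 0 := by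
  refine le_antisymm ?_ (Hnonneg h6 hμ 0)
  have hcont : Tendsto (fun t : ℝ => H (t • ((1:ℝ), (0:ℝ)))) (𝓝[>] (0:ℝ)) (𝓝 (H 0)) := by
    have hc : Continuous fun t : ℝ => H (t • ((1:ℝ), (0:ℝ))) :=
      h0.continuous.comp (by continuity)
    simpa using (hc.tendsto 0).mono_left nhdsWithin_le_nhds
  have hb : Tendsto (fun t : ℝ => t ^ 3 * H ((1:ℝ), (0:ℝ))) (𝓝[>] (0:ℝ)) (𝓝 0) := by
    have hc : Continuous fun t : ℝ => t ^ 3 * H ((1:ℝ), (0:ℝ)) := by continuity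
    simpa using (hc.tendsto 0).mono_left nhdsWithin_le_nhds
  refine le_of_tendsto_of_tendsto hcont hb ?_
  filter_upwards [Ioo_mem_nhdsGT_of_mem (by norm_num : (0:ℝ) ∈ Set.Ico (0:ℝ) 1)] with t ht
  exact ray_bound h0 hθ h2 _ (by simp [Prod.ext_iff]) ht.1 ht.2.le

lemma ray_bound' {H : ℝ × ℝ → ℝ} {θ σ μ : ℝ} (h0 : ContDiff ℝ 2 H) (hθ : 3 ≤ θ)
    (h2 : cond2 H θ) (h6 : cond6 H σ μ) (hμ : 0 < μ) (z : ℝ × ℝ) {t : ℝ}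
    (ht0 : 0 < t) (ht1 : t ≤ 1) : H (t • z) ≤ t ^ 3 * H z := by
  rcases eq_or_ne z 0 with rfl | hz
  · rw [smul_zero, H_zero h0 hθ h2 h6 hμ]; simp
  · exact ray_bound h0 hθ h2 z hz ht0 ht1

lemma fderiv_scale (u : Plane → ℝ) (hu : Differentiable ℝ u) (c : ℝ) (x : Plane) :
    fderiv ℝ (fun x => c * u (c • x)) x = (c * c) • fderiv ℝ u (c • x) := by
  have hin : HasFDerivAt (fun x : Plane => c • x) (c • ContinuousLinearMap.id ℝ Plane) x := by
    exact (ContinuousLinearMap.id ℝ Plane).hasFDerivAt.const_smul c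
  have h1 : HasFDerivAt (fun x => u (c • x))
      ((fderiv ℝ u (c • x)).comp (c • ContinuousLinearMap.id ℝ Plane)) x :=
    (hu (c • x)).hasFDerivAt.comp x hin
  have h2 : HasFDerivAt (fun x => c * u (c • x))
      (c • ((fderiv ℝ u (c • x)).comp (c • ContinuousLinearMap.id ℝ Plane))) x :=
    h1.const_mul c
  rw [h2.fderiv, ContinuousLinearMap.comp_smul, ContinuousLinearMap.comp_id, smul_smul]

lemma grad2_scale (u : Plane → ℝ) (hu : Differentiable ℝ u) (c : ℝ) (hc : 0 < c) :
    grad2 (fun x => c * u (c • x)) = c ^ 2 * grad2 u := by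
  have step1 : grad2 (fun x => c * u (c • x))
      = ∫ x, ((c * c) * ‖fderiv ℝ u (c • x)‖) ^ 2 := by
    unfold grad2
    congr 1; funext x
    rw [norm_gradient_eq, fderiv_scale u hu c x, norm_smul, Real.norm_eq_abs,
      abs_of_pos (mul_pos hc hc)]
  rw [step1]
  have step2 : ∫ x, ((c * c) * ‖fderiv ℝ u (c • x)‖) ^ 2
      = (c * c) ^ 2 * ∫ x, (fun y => ‖fderiv ℝ u y‖ ^ 2) (c • x) := by
    rw [← integral_const_mul]
    congr 1; funext x; ring
  rw [step2, int_comp (fun y => ‖fderiv ℝ u y‖ ^ 2) c hc]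
  have step3 : ∫ y, ‖fderiv ℝ u y‖ ^ 2 = grad2 u := by
    unfold grad2; congr 1; funext y; rw [norm_gradient_eq]
  rw [step3]
  field_simp

lemma exp_sq (x : ℝ) : Real.exp x ^ 2 = Real.exp (2 * x) := by
  rw [two_mul, Real.exp_add]; ring

lemma exp_cube (x : ℝ) : Real.exp x ^ 3 = Real.exp (3 * x) := by
  rw [show (3:ℝ) * x = x + x + x by ring, Real.exp_add, Real.exp_add]; ring

/-- Lemma 3.1 (i): `‖∇F(w,s)‖_{L²} → 0` and `J(F(w,s)) → 0` as `s → -∞`. -/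
theorem geometry_at_minus_infty (H : ℝ × ℝ → ℝ) (τ θ σ μ γ₀ a b : ℝ)
    (hτ : 3 < τ) (hθ : 4 < θ) (hσ : 4 < σ) (hμ : 0 < μ) (hγ₀ : 0 < γ₀)
    (h0 : ContDiff ℝ 2 H) (h1 : cond1 H τ) (h2 : cond2 H θ)
    (h6 : cond6 H σ μ) (h7 : cond7 H γ₀)
    (ha : 0 < a) (hb : 0 < b) (hab : a ^ 2 + b ^ 2 < 2 * π / γ₀)
    (w : (Plane → ℝ) × (Plane → ℝ)) (hw : InTr a b w) :
    Tendsto (fun s => Real.sqrt (gradD2 (scaleF w s))) atBot (𝓝 0) ∧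
    Tendsto (fun s => Jfun H (scaleF w s)) atBot (𝓝 0) := by
  have hu : Differentiable ℝ w.1 := hw.1.1.2.1
  have hv : Differentiable ℝ w.2 := hw.1.2.1.2.1
  have hθ3 : (3:ℝ) ≤ θ := by linarith
  set G := gradD2 w with hGdef
  have hGnn : 0 ≤ G := add_nonneg (integral_nonneg fun x => by positivity)
      (integral_nonneg fun x => by positivity)
  have hG : ∀ s, gradD2 (scaleF w s) = Real.exp s ^ 2 * G := by
    intro s
    have e1 : grad2 (scaleF w s).1 = Real.exp s ^ 2 * grad2 w.1 :=
      grad2_scale w.1 hu _ (Real.exp_pos s)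
    have e2 : grad2 (scaleF w s).2 = Real.exp s ^ 2 * grad2 w.2 :=
      grad2_scale w.2 hv _ (Real.exp_pos s)
    rw [hGdef]
    unfold gradD2
    rw [e1, e2]; ring
  constructor
  · have heq : (fun s => Real.sqrt (gradD2 (scaleF w s)))
        = fun s => Real.exp s * Real.sqrt G := by
      funext s
      rw [hG s, Real.sqrt_mul (sq_nonneg _), Real.sqrt_sq (Real.exp_pos s).le]
    rw [heq]
    simpa using Real.tendsto_exp_atBot.mul_const (Real.sqrt G)
  · set A : ℝ → ℝ := fun c => ∫ y, H (c • (w.1 y, w.2 y)) with hA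
    have hNN : ∀ c, 0 ≤ A c := fun c => integral_nonneg fun y => Hnonneg h6 hμ _
    have hkeyJ : ∀ s, Jfun H (scaleF w s)
        = 1/2 * (Real.exp s ^ 2 * G) - (Real.exp s ^ 2)⁻¹ * A (Real.exp s) := by
      intro s
      unfold Jfun
      rw [hG s]
      congr 1
      calc ∫ x, H ((scaleF w s).1 x, (scaleF w s).2 x)
          = ∫ x, (fun y => H (Real.exp s • (w.1 y, w.2 y))) (Real.exp s • x) := by
            simp only [scaleF, Prod.smul_mk, smul_eq_mul]
        _ = (Real.exp s ^ 2)⁻¹ * A (Real.exp s) :=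
            int_comp (fun y => H (Real.exp s • (w.1 y, w.2 y))) _ (Real.exp_pos s)
    have T1 : Tendsto (fun s => 1/2 * (Real.exp s ^ 2 * G)) atBot (𝓝 (0:ℝ)) := by
      have h' : Tendsto (fun s => Real.exp s ^ 2) atBot (𝓝 (0:ℝ)) := by
        simpa using Real.tendsto_exp_atBot.pow 2
      simpa using (h'.mul_const G).const_mul (1/2 : ℝ)
    have T2 : Tendsto (fun s => (Real.exp s ^ 2)⁻¹ * A (Real.exp s)) atBot (𝓝 (0:ℝ)) := by
      by_cases hI : ∃ s₀ : ℝ, Integrable (fun y => H (Real.exp s₀ • (w.1 y, w.2 y))) volume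
      · obtain ⟨s₀, hint⟩ := hI
        set C := Real.exp (-(3 * s₀)) * A (Real.exp s₀) with hC
        have meas : ∀ c : ℝ,
            AEStronglyMeasurable (fun y => H (c • (w.1 y, w.2 y))) volume := fun c =>
          (h0.continuous.comp ((hu.continuous.prodMk hv.continuous).const_smul c)).aestronglyMeasurable
        have hpt : ∀ s ≤ s₀, ∀ y, H (Real.exp s • (w.1 y, w.2 y))
            ≤ Real.exp (s - s₀) ^ 3 * H (Real.exp s₀ • (w.1 y, w.2 y)) := by
          intro s hs y
          have hsm : Real.exp s • ((w.1 y, w.2 y) : ℝ × ℝ)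
              = Real.exp (s - s₀) • (Real.exp s₀ • (w.1 y, w.2 y)) := by
            rw [smul_smul, ← Real.exp_add]; ring_nf
          rw [hsm]
          exact ray_bound' h0 hθ3 h2 h6 hμ _ (Real.exp_pos _)
            (Real.exp_le_one_iff.2 (by linarith))
        have hintS : ∀ s ≤ s₀,
            Integrable (fun y => H (Real.exp s • (w.1 y, w.2 y))) volume := by
          intro s hs
          refine (hint.const_mul (Real.exp (s - s₀) ^ 3)).mono' (meas _) ?_
          filter_upwards with y
          rw [Real.norm_eq_abs, abs_of_nonneg (Hnonneg h6 hμ _)]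
          exact hpt s hs y
        have hAle : ∀ s ≤ s₀, A (Real.exp s) ≤ Real.exp (s - s₀) ^ 3 * A (Real.exp s₀) := by
          intro s hs
          calc A (Real.exp s)
              ≤ ∫ y, Real.exp (s - s₀) ^ 3 * H (Real.exp s₀ • (w.1 y, w.2 y)) :=
                integral_mono (hintS s hs) (hint.const_mul _) (hpt s hs)
            _ = Real.exp (s - s₀) ^ 3 * A (Real.exp s₀) := integral_const_mul _ _
        have hupper : ∀ s ≤ s₀, (Real.exp s ^ 2)⁻¹ * A (Real.exp s) ≤ Real.exp s * C := by
          intro s hs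
          have h1 : (Real.exp s ^ 2)⁻¹ * A (Real.exp s)
              ≤ (Real.exp s ^ 2)⁻¹ * (Real.exp (s - s₀) ^ 3 * A (Real.exp s₀)) :=
            mul_le_mul_of_nonneg_left (hAle s hs) (by positivity)
          refine h1.trans_eq ?_
          rw [hC, exp_sq, exp_cube, ← Real.exp_neg, ← mul_assoc, ← Real.exp_add,
            ← mul_assoc, ← Real.exp_add]
          congr 2
          ring
        apply tendsto_of_tendsto_of_tendsto_of_le_of_le' tendsto_const_nhds
          (by simpa using Real.tendsto_exp_atBot.mul_const C)
        · exact Eventually.of_forall fun s => mul_nonneg (by positivity) (hNN _)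
        · filter_upwards [eventually_le_atBot s₀] with s hs using hupper s hs
      · push_neg at hI
        have hz : ∀ s : ℝ, A (Real.exp s) = 0 := fun s => integral_undef (hI s)
        have heq : (fun s => (Real.exp s ^ 2)⁻¹ * A (Real.exp s)) = fun _ => (0:ℝ) := by
          funext s; rw [hz s, mul_zero]
        rw [heq]; exact tendsto_const_nhds
    exact Tendsto.congr (fun s => (hkeyJ s).symm) (by simpa using T1.sub T2)
end
end
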